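/- Let S be a formula over ℂ. Then the products Fₙ extend uniquely to bilinear maps (A,B) ↦ AₙB on ℂ[D]⊗S, one for each n ∈ ℕ, such that AₙB = Fₙ(A,B) for A,B ∈ S, and (DA)ₙB = −n·A_{n−1}B for n ≥ 1, (DA)₀B = 0, and D(AₙB) = (DA)ₙB + Aₙ(DB) for all A,B ∈ ℂ[D]⊗S and n ∈ ℕ. Moreover, for all A,B ∈ ℂ[D]⊗S one has AₙB = 0 for n sufficiently large. -/

import Mathlib

open scoped BigOperators

noncomputable section

variable {S : Type*} [AddCommGroup S] [Module ℂ S]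

/-- The operator `D` on `ℂ[D]⊗S` (realized as `ℕ →₀ S`, where `Finsupp.single k u`
stands for `D^k ⊗ u`): it sends `D^k ⊗ u` to `D^{k+1} ⊗ u`. -/
def Dop (S : Type*) [AddCommGroup S] [Module ℂ S] : (ℕ →₀ S) →ₗ[ℂ] (ℕ →₀ S) :=
  Finsupp.lmapDomain S ℂ (fun k => k + 1)

/-- A formula over `ℂ`: a vector space `S` with bilinear maps
`Fₙ : S × S → ℂ[D]⊗S` (`n : ℕ`), vanishing for `n` sufficiently large. -/
structure Formula (S : Type*) [AddCommGroup S] [Module ℂ S] where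
  F : ℕ → S →ₗ[ℂ] S →ₗ[ℂ] (ℕ →₀ S)
  trunc : ∀ u v : S, ∃ N : ℕ, ∀ n : ℕ, N ≤ n → F n u v = 0

/-- The defining properties of the extension of the products of a formula `S`
to `ℂ[D]⊗S`: it agrees with `Fₙ` on `S`, and satisfies `(DA)ₙB = −n·A_{n−1}B`,
`(DA)₀B = 0` and `D(AₙB) = (DA)ₙB + Aₙ(DB)`. -/
def ExtProp (A : Formula S)
    (M : ℕ → (ℕ →₀ S) →ₗ[ℂ] (ℕ →₀ S) →ₗ[ℂ] (ℕ →₀ S)) : Prop :=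
  (∀ (n : ℕ) (u v : S), M n (Finsupp.single 0 u) (Finsupp.single 0 v) = A.F n u v) ∧
  (∀ (n : ℕ) (x y : ℕ →₀ S), M (n + 1) (Dop S x) y = (-((n : ℂ) + 1)) • M n x y) ∧
  (∀ x y : ℕ →₀ S, M 0 (Dop S x) y = 0) ∧
  (∀ (n : ℕ) (x y : ℕ →₀ S),
    Dop S (M n x y) = M n (Dop S x) y + M n x (Dop S y))

namespace Stmt13

lemma Dop_single (j : ℕ) (u : S) :
    Dop S (Finsupp.single j u) = Finsupp.single (j + 1) u := by
  simp [Dop, Finsupp.lmapDomain_apply, Finsupp.mapDomain_single]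

def coefC (n j k i : ℕ) : ℂ :=
  (-1) ^ j * (n.descFactorial j : ℂ) * (k.choose i : ℂ) * ((n - j).descFactorial i : ℂ)

def Bmap (A : Formula S) (n j k : ℕ) : S →ₗ[ℂ] S →ₗ[ℂ] (ℕ →₀ S) :=
  ∑ i ∈ Finset.range (k + 1),
    coefC n j k i • (A.F (n - j - i)).compr₂ ((Dop S) ^ (k - i))

def Mdef (A : Formula S) (n : ℕ) : (ℕ →₀ S) →ₗ[ℂ] (ℕ →₀ S) →ₗ[ℂ] (ℕ →₀ S) :=
  Finsupp.lsum ℂ fun j =>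
    ((Finsupp.lsum ℂ : (ℕ → S →ₗ[ℂ] (ℕ →₀ S)) ≃ₗ[ℂ] ((ℕ →₀ S) →ₗ[ℂ] (ℕ →₀ S))) :
        (ℕ → S →ₗ[ℂ] (ℕ →₀ S)) →ₗ[ℂ] ((ℕ →₀ S) →ₗ[ℂ] (ℕ →₀ S))).comp
      (LinearMap.pi fun k => Bmap A n j k)

lemma Mdef_single (A : Formula S) (n j k : ℕ) (u v : S) :
    Mdef A n (Finsupp.single j u) (Finsupp.single k v)
      = ∑ i ∈ Finset.range (k + 1),
          coefC n j k i • ((Dop S) ^ (k - i)) (A.F (n - j - i) u v) := by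
  simp [Mdef, Bmap, Finsupp.lsum_single, LinearMap.pi_apply]




lemma descSucc (m i : ℕ) : m.descFactorial (i + 1) = m * (m - 1).descFactorial i := by
  cases m with
  | zero => simp
  | succ m => rw [Nat.succ_descFactorial_succ]; simp

lemma coefC_zero_left (j k i : ℕ) : coefC 0 (j + 1) k i = 0 := by
  simp [coefC]

lemma coefC_succ (n j k i : ℕ) :
    coefC (n + 1) (j + 1) k i = (-((n : ℂ) + 1)) * coefC n j k i := by
  simp only [coefC, Nat.succ_descFactorial_succ, Nat.succ_sub_succ]
  push_cast; ring

lemma coefC_choose_top (n j k : ℕ) : coefC n j k (k + 1) = 0 := by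
  simp [coefC, Nat.choose_succ_self]

lemma coefC_der_zero (n j k : ℕ) : coefC n j k 0 = coefC n j (k + 1) 0 := by
  simp [coefC]

lemma coefC_der_succ (n j k i : ℕ) :
    coefC n j k (i + 1) = coefC n (j + 1) k i + coefC n j (k + 1) (i + 1) := by
  simp only [coefC]
  have h1 : (n - j).descFactorial (i + 1) = (n - j) * (n - (j + 1)).descFactorial i := by
    rw [descSucc, Nat.sub_sub]
  have h2 : n.descFactorial (j + 1) = (n - j) * n.descFactorial j := Nat.descFactorial_succ n j
  have h3 : (k + 1).choose (i + 1) = k.choose i + k.choose (i + 1) := Nat.choose_succ_succ k i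
  rw [h1, h2, h3]
  push_cast; ring

lemma coefC_zero_zero (n : ℕ) : coefC n 0 0 0 = 1 := by simp [coefC]


lemma Mdef_rule1 (A : Formula S) (n : ℕ) (u v : S) :
    Mdef A n (Finsupp.single 0 u) (Finsupp.single 0 v) = A.F n u v := by
  rw [Mdef_single]
  simp [coefC_zero_zero]

lemma Mdef_rule2_single (A : Formula S) (n j k : ℕ) (u v : S) :
    Mdef A (n + 1) (Finsupp.single (j + 1) u) (Finsupp.single k v)
      = (-((n : ℂ) + 1)) • Mdef A n (Finsupp.single j u) (Finsupp.single k v) := by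
  rw [Mdef_single, Mdef_single, Finset.smul_sum]
  refine Finset.sum_congr rfl fun i _ => ?_
  rw [coefC_succ, Nat.succ_sub_succ, mul_smul]

lemma Mdef_rule3_single (A : Formula S) (j k : ℕ) (u v : S) :
    Mdef A 0 (Finsupp.single (j + 1) u) (Finsupp.single k v) = 0 := by
  rw [Mdef_single]
  simp [coefC_zero_left]

lemma Mdef_rule4_single (A : Formula S) (n j k : ℕ) (u v : S) :
    Dop S (Mdef A n (Finsupp.single j u) (Finsupp.single k v))
      = Mdef A n (Finsupp.single (j + 1) u) (Finsupp.single k v)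
        + Mdef A n (Finsupp.single j u) (Finsupp.single (k + 1) v) := by
  rw [Mdef_single, Mdef_single, Mdef_single, map_sum]
  -- LHS: apply Dop to each term, getting Dop^(k+1-i)
  have hL : ∀ i ∈ Finset.range (k + 1),
      Dop S (coefC n j k i • ((Dop S) ^ (k - i)) (A.F (n - j - i) u v))
        = coefC n j k i • ((Dop S) ^ (k + 1 - i)) (A.F (n - j - i) u v) := by
    intro i hi
    rw [Finset.mem_range] at hi
    rw [map_smul]
    congr 1
    have : k + 1 - i = (k - i) + 1 := by omega
    rw [this, pow_succ']
    rfl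
  rw [Finset.sum_congr rfl hL]
  -- extend LHS sum to range (k+2), extra term vanishes
  have hLext : ∑ i ∈ Finset.range (k + 2),
      coefC n j k i • ((Dop S) ^ (k + 1 - i)) (A.F (n - j - i) u v)
      = ∑ i ∈ Finset.range (k + 1),
          coefC n j k i • ((Dop S) ^ (k + 1 - i)) (A.F (n - j - i) u v) := by
    rw [Finset.sum_range_succ, coefC_choose_top]
    simp
  rw [← hLext]
  -- rewrite first RHS sum as a sum over range (k+2)
  have hR1 : (∑ i ∈ Finset.range (k + 2),
          (if i = 0 then (0 : ℕ →₀ S) else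
            coefC n (j + 1) k (i - 1) • ((Dop S) ^ (k + 1 - i)) (A.F (n - j - i) u v)))
      = ∑ i ∈ Finset.range (k + 1),
          coefC n (j + 1) k i • ((Dop S) ^ (k - i)) (A.F (n - (j + 1) - i) u v) := by
    rw [Finset.sum_range_succ' _ (k + 1)]
    simp only [reduceIte, Nat.succ_ne_zero, if_false, add_zero, Nat.add_sub_cancel]
    refine Finset.sum_congr rfl fun i _ => ?_
    have e1 : k + 1 - (i + 1) = k - i := by omega
    have e2 : n - j - (i + 1) = n - (j + 1) - i := by omega
    rw [e1, e2]
  rw [← hR1, ← Finset.sum_add_distrib]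
  refine Finset.sum_congr rfl fun i hi => ?_
  cases i with
  | zero =>
    rw [if_pos rfl, zero_add, coefC_der_zero]
  | succ i =>
    rw [if_neg (Nat.succ_ne_zero i), Nat.add_sub_cancel, coefC_der_succ n j k i,
      add_smul, add_comm]

lemma lhom_ext₂ {f g : (ℕ →₀ S) →ₗ[ℂ] (ℕ →₀ S) →ₗ[ℂ] (ℕ →₀ S)}
    (h : ∀ j u k v, f (Finsupp.single j u) (Finsupp.single k v)
        = g (Finsupp.single j u) (Finsupp.single k v)) : f = g :=
  Finsupp.lhom_ext fun j u => Finsupp.lhom_ext fun k v => h j u k v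

lemma Mdef_rule2 (A : Formula S) (n : ℕ) (x y : ℕ →₀ S) :
    Mdef A (n + 1) (Dop S x) y = (-((n : ℂ) + 1)) • Mdef A n x y := by
  have h : (Mdef A (n + 1)).comp (Dop S) = (-((n : ℂ) + 1)) • Mdef A n := by
    apply lhom_ext₂
    intro j u k v
    simp only [LinearMap.comp_apply, LinearMap.smul_apply, Dop_single]
    rw [Mdef_rule2_single]
  calc Mdef A (n + 1) (Dop S x) y = ((Mdef A (n + 1)).comp (Dop S)) x y := rfl
    _ = (((-((n : ℂ) + 1)) • Mdef A n) x) y := by rw [h]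
    _ = (-((n : ℂ) + 1)) • Mdef A n x y := rfl

lemma Mdef_rule3 (A : Formula S) (x y : ℕ →₀ S) :
    Mdef A 0 (Dop S x) y = 0 := by
  have h : (Mdef A 0).comp (Dop S) = 0 := by
    apply lhom_ext₂
    intro j u k v
    simp only [LinearMap.comp_apply, Dop_single, LinearMap.zero_apply]
    rw [Mdef_rule3_single]
  calc Mdef A 0 (Dop S x) y = ((Mdef A 0).comp (Dop S)) x y := rfl
    _ = (0 : (ℕ →₀ S) →ₗ[ℂ] (ℕ →₀ S) →ₗ[ℂ] (ℕ →₀ S)) x y := by rw [h]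
    _ = 0 := rfl

lemma Mdef_rule4 (A : Formula S) (n : ℕ) (x y : ℕ →₀ S) :
    Dop S (Mdef A n x y) = Mdef A n (Dop S x) y + Mdef A n x (Dop S y) := by
  have h : (Mdef A n).compr₂ (Dop S)
      = (Mdef A n).comp (Dop S) + (Mdef A n).compl₂ (Dop S) := by
    apply lhom_ext₂
    intro j u k v
    simp only [LinearMap.compr₂_apply, LinearMap.add_apply, LinearMap.comp_apply,
      LinearMap.compl₂_apply, Dop_single]
    rw [Mdef_rule4_single]
  calc Dop S (Mdef A n x y) = ((Mdef A n).compr₂ (Dop S)) x y := rfl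
    _ = (((Mdef A n).comp (Dop S) + (Mdef A n).compl₂ (Dop S)) x) y := by rw [h]
    _ = Mdef A n (Dop S x) y + Mdef A n x (Dop S y) := rfl

lemma Mdef_extProp (A : Formula S) : ExtProp A (Mdef A) :=
  ⟨Mdef_rule1 A, Mdef_rule2 A, Mdef_rule3 A, Mdef_rule4 A⟩

lemma ext_unique (A : Formula S)
    {M M' : ℕ → (ℕ →₀ S) →ₗ[ℂ] (ℕ →₀ S) →ₗ[ℂ] (ℕ →₀ S)}
    (hM : ExtProp A M) (hM' : ExtProp A M') : M = M' := by
  have key : ∀ (k n j : ℕ) (u v : S),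
      M n (Finsupp.single j u) (Finsupp.single k v)
        = M' n (Finsupp.single j u) (Finsupp.single k v) := by
    intro k
    induction k with
    | zero =>
      intro n j
      induction j generalizing n with
      | zero => intro u v; rw [hM.1, hM'.1]
      | succ j ih =>
        intro u v
        rw [← Dop_single]
        cases n with
        | zero => rw [hM.2.2.1, hM'.2.2.1]
        | succ m => rw [hM.2.1, hM'.2.1, ih]
    | succ k ih =>
      intro n j u v
      have e : ∀ (N : ℕ → (ℕ →₀ S) →ₗ[ℂ] (ℕ →₀ S) →ₗ[ℂ] (ℕ →₀ S)), ExtProp A N →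
          N n (Finsupp.single j u) (Finsupp.single (k + 1) v)
            = Dop S (N n (Finsupp.single j u) (Finsupp.single k v))
              - N n (Finsupp.single (j + 1) u) (Finsupp.single k v) := by
        intro N hN
        rw [eq_sub_iff_add_eq, ← Dop_single j u, ← Dop_single k v, add_comm]
        exact (hN.2.2.2 n _ _).symm
      rw [e M hM, e M' hM', ih, ih]
  funext n
  exact lhom_ext₂ fun j u k v => key k n j u v

lemma Mdef_trunc_single (A : Formula S) (j k : ℕ) (u v : S) :
    ∃ N : ℕ, ∀ n : ℕ, N ≤ n →
      Mdef A n (Finsupp.single j u) (Finsupp.single k v) = 0 := by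
  obtain ⟨N₀, h₀⟩ := A.trunc u v
  refine ⟨N₀ + j + k, fun n hn => ?_⟩
  rw [Mdef_single]
  refine Finset.sum_eq_zero fun i hi => ?_
  rw [Finset.mem_range] at hi
  rw [h₀ (n - j - i) (by omega)]
  simp

lemma Mdef_trunc1 (A : Formula S) (k : ℕ) (v : S) (x : ℕ →₀ S) :
    ∃ N : ℕ, ∀ n : ℕ, N ≤ n → Mdef A n x (Finsupp.single k v) = 0 := by
  induction x using Finsupp.induction with
  | zero => exact ⟨0, fun n _ => by simp⟩
  | single_add j u f hjf hu ih =>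
    obtain ⟨N₁, h₁⟩ := Mdef_trunc_single A j k u v
    obtain ⟨N₂, h₂⟩ := ih
    refine ⟨max N₁ N₂, fun n hn => ?_⟩
    rw [map_add, LinearMap.add_apply, h₁ n (le_trans (le_max_left _ _) hn),
      h₂ n (le_trans (le_max_right _ _) hn), add_zero]

lemma Mdef_trunc (A : Formula S) (x y : ℕ →₀ S) :
    ∃ N : ℕ, ∀ n : ℕ, N ≤ n → Mdef A n x y = 0 := by
  induction y using Finsupp.induction with
  | zero => exact ⟨0, fun n _ => by simp⟩
  | single_add k v f hkf hv ih =>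
    obtain ⟨N₁, h₁⟩ := Mdef_trunc1 A k v x
    obtain ⟨N₂, h₂⟩ := ih
    refine ⟨max N₁ N₂, fun n hn => ?_⟩
    rw [map_add, h₁ n (le_trans (le_max_left _ _) hn),
      h₂ n (le_trans (le_max_right _ _) hn), add_zero]

end Stmt13

/-- for a formula `S`, the products `Fₙ` extend uniquely to bilinear maps
on `ℂ[D]⊗S` compatible with `D` as above; moreover, for the extension, `AₙB = 0` for
`n` sufficiently large. -/
theorem stmt13 (A : Formula S) :
    (∃! M : ℕ → (ℕ →₀ S) →ₗ[ℂ] (ℕ →₀ S) →ₗ[ℂ] (ℕ →₀ S), ExtProp A M) ∧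
    ∀ M : ℕ → (ℕ →₀ S) →ₗ[ℂ] (ℕ →₀ S) →ₗ[ℂ] (ℕ →₀ S), ExtProp A M →
      ∀ x y : ℕ →₀ S, ∃ N : ℕ, ∀ n : ℕ, N ≤ n → M n x y = 0 := by
  constructor
  · exact ⟨Stmt13.Mdef A, Stmt13.Mdef_extProp A,
      fun M hM => Stmt13.ext_unique A hM (Stmt13.Mdef_extProp A)⟩
  · intro M hM x y
    rw [Stmt13.ext_unique A hM (Stmt13.Mdef_extProp A)]
    exact Stmt13.Mdef_trunc A x y


end
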